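/- Let σ > 0 and A > 0, and let Z be a real random variable whose law is the centered Gaussian measure on ℝ with variance σ². Then there exists a constant c > 0 such that for every t ≥ 1 and every h with 0 ≤ h ≤ A/√t, E[Φ̄(h·√t − B/√t) − e^{2hB}·Φ̄(h·√t + B/√t)] ≥ c/√t, where B = max(Z − h, 0)/σ². -/

import Mathlib

open Real Filter MeasureTheory

/-- Standard normal density. -/
noncomputable def stdPhi (u : ℝ) : ℝ := (Real.sqrt (2 * Real.pi))⁻¹ * Real.exp (-u ^ 2 / 2)

/-- Standard normal distribution function. -/
noncomputable def stdCdf (u : ℝ) : ℝ := ∫ s in Set.Iic u, stdPhi s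

/-- Standard normal survivor function. -/
noncomputable def stdSurv (u : ℝ) : ℝ := 1 - stdCdf u

lemma stdPhi_pos (u : ℝ) : 0 < stdPhi u := by
  unfold stdPhi
  positivity

lemma continuous_stdPhi : Continuous stdPhi := by
  unfold stdPhi
  fun_prop

lemma integrable_stdPhi : Integrable stdPhi := by
  have h : Integrable (fun x : ℝ => Real.exp (-(1/2) * x ^ 2)) := integrable_exp_neg_mul_sq (by norm_num)
  have : (fun u : ℝ => stdPhi u) = fun u => (Real.sqrt (2 * Real.pi))⁻¹ * Real.exp (-(1/2) * u ^ 2) := by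
    funext u; unfold stdPhi; ring_nf
  rw [show stdPhi = fun u => stdPhi u from rfl, this]
  exact h.const_mul _

lemma hasDerivAt_stdCdf (u : ℝ) : HasDerivAt stdCdf (stdPhi u) u := by
  have key : ∀ v : ℝ, stdCdf v = stdCdf 0 + ∫ s in (0:ℝ)..v, stdPhi s := by
    intro v
    rw [← intervalIntegral.integral_Iic_sub_Iic integrable_stdPhi.integrableOn
      integrable_stdPhi.integrableOn]
    unfold stdCdf; ring
  have hd : HasDerivAt (fun v => stdCdf 0 + ∫ s in (0:ℝ)..v, stdPhi s) (stdPhi u) u := by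
    have := (intervalIntegral.integral_hasStrictDerivAt_right
      (continuous_stdPhi.intervalIntegrable 0 u)
      (continuous_stdPhi.stronglyMeasurableAtFilter _ _)
      continuous_stdPhi.continuousAt).hasDerivAt
    simpa using (this.const_add (stdCdf 0))
  have : stdCdf = fun v => stdCdf 0 + ∫ s in (0:ℝ)..v, stdPhi s := funext key
  rw [this]; exact hd

lemma continuous_stdCdf : Continuous stdCdf := by
  have : Differentiable ℝ stdCdf := fun u => (hasDerivAt_stdCdf u).differentiableAt
  exact this.continuous

lemma continuous_stdSurv : Continuous stdSurv :=
  continuous_const.sub continuous_stdCdf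

lemma stdCdf_total : (∫ s, stdPhi s) = 1 := by
  have : (fun s : ℝ => stdPhi s) = fun s => (Real.sqrt (2 * Real.pi))⁻¹ * Real.exp (-(1/2) * s ^ 2) := by
    funext u; unfold stdPhi; ring_nf
  rw [show (∫ s, stdPhi s) = ∫ s, (Real.sqrt (2 * Real.pi))⁻¹ * Real.exp (-(1/2) * s ^ 2) by rw [← this]]
  rw [MeasureTheory.integral_const_mul, integral_gaussian]
  rw [inv_mul_eq_div, div_eq_one_iff_eq (by positivity)]
  rw [show Real.pi / (1/2) = 2 * Real.pi by ring]

lemma stdSurv_eq (u : ℝ) : stdSurv u = ∫ s in Set.Ioi u, stdPhi s := by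
  have := intervalIntegral.integral_Iic_add_Ioi (b := u) (f := stdPhi)
    integrable_stdPhi.integrableOn integrable_stdPhi.integrableOn
  unfold stdSurv stdCdf
  rw [← stdCdf_total]
  linarith [this]

lemma hasDerivAt_stdPhi (u : ℝ) : HasDerivAt stdPhi (-u * stdPhi u) u := by
  unfold stdPhi
  have h1 : HasDerivAt (fun v : ℝ => -v ^ 2 / 2) (-u) u := by
    have := ((hasDerivAt_pow 2 u).neg).div_const 2
    simpa using this.congr_deriv (by ring)
  have h2 := (h1.exp).const_mul (Real.sqrt (2 * Real.pi))⁻¹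
  exact h2.congr_deriv (by ring)

lemma integrable_mul_stdPhi : Integrable (fun s => s * stdPhi s) := by
  have h : Integrable (fun x : ℝ => x * Real.exp (-(1/2) * x ^ 2)) :=
    integrable_mul_exp_neg_mul_sq (by norm_num)
  have : (fun s : ℝ => s * stdPhi s)
      = fun s => (Real.sqrt (2 * Real.pi))⁻¹ * (s * Real.exp (-(1/2) * s ^ 2)) := by
    funext s; unfold stdPhi; ring_nf
  rw [this]
  exact h.const_mul _

lemma stdPhi_tendsto_zero : Tendsto stdPhi atTop (nhds 0) := by
  have h0 : Tendsto (fun u : ℝ => u ^ 2) atTop atTop := tendsto_pow_atTop two_ne_zero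
  have h : Tendsto (fun u : ℝ => -u ^ 2 / 2) atTop atBot := by
    apply Filter.Tendsto.atBot_div_const (by norm_num)
    exact tendsto_neg_atBot_iff.mpr h0
  have h2 := (Real.tendsto_exp_atBot.comp h).const_mul (Real.sqrt (2 * Real.pi))⁻¹
  rw [mul_zero] at h2
  exact h2

lemma integral_mul_stdPhi_Ioi (u : ℝ) : (∫ s in Set.Ioi u, s * stdPhi s) = stdPhi u := by
  have := MeasureTheory.integral_Ioi_of_hasDerivAt_of_tendsto' (a := u) (m := 0)
    (f := fun s => -stdPhi s) (f' := fun s => s * stdPhi s)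
    (fun x _ => (hasDerivAt_stdPhi x).neg.congr_deriv (by ring))
    integrable_mul_stdPhi.integrableOn
    (by simpa using stdPhi_tendsto_zero.neg)
  simpa using this

lemma mills {x u : ℝ} (hx : 0 ≤ x) (hxu : x ≤ u) : x * stdSurv u < stdPhi u := by
  have h1 : stdPhi u - x * stdSurv u = ∫ s in Set.Ioi u, (s - x) * stdPhi s := by
    rw [stdSurv_eq, ← integral_mul_stdPhi_Ioi u, ← MeasureTheory.integral_const_mul,
      ← MeasureTheory.integral_sub (integrable_mul_stdPhi.integrableOn)
        ((integrable_stdPhi.const_mul x).integrableOn)]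
    congr 1; funext s; ring
  have hint : IntegrableOn (fun s => (s - x) * stdPhi s) (Set.Ioi u) := by
    have : (fun s : ℝ => (s - x) * stdPhi s) = fun s => s * stdPhi s - x * stdPhi s := by
      funext s; ring
    rw [this]
    exact (integrable_mul_stdPhi.sub (integrable_stdPhi.const_mul x)).integrableOn
  have hpos : 0 < ∫ s in Set.Ioi u, (s - x) * stdPhi s := by
    rw [MeasureTheory.setIntegral_pos_iff_support_of_nonneg_ae _ hint]
    · have hsub : Set.Ioi (max u x) ⊆ Function.support (fun s => (s - x) * stdPhi s) ∩ Set.Ioi u := by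
        intro s hs
        simp only [Set.mem_Ioi, lt_max_iff] at hs ⊢
        constructor
        · simp only [Function.mem_support]
          have hsx : x < s := lt_of_le_of_lt (le_max_right u x) hs
          exact mul_ne_zero (by linarith) (stdPhi_pos s).ne'
        · exact lt_of_le_of_lt (le_max_left u x) hs
      calc (0:ENNReal) < volume (Set.Ioi (max u x)) := by simp
        _ ≤ _ := measure_mono hsub
    · filter_upwards [MeasureTheory.ae_restrict_mem measurableSet_Ioi] with s hs
      have hsx : x ≤ s := le_trans hxu (le_of_lt hs)
      exact mul_nonneg (by linarith) (stdPhi_pos s).le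
  linarith

noncomputable def fFun (x y : ℝ) : ℝ := stdSurv (x - y) - Real.exp (2 * x * y) * stdSurv (x + y)

lemma stdPhi_reflect (x s : ℝ) : stdPhi (x - s) = Real.exp (2 * x * s) * stdPhi (x + s) := by
  unfold stdPhi
  rw [mul_comm (Real.exp (2 * x * s)), mul_assoc, ← Real.exp_add]
  congr 2
  ring

lemma hasDerivAt_fFun (x s : ℝ) :
    HasDerivAt (fun w => fFun x w)
      (2 * Real.exp (2 * x * s) * (stdPhi (x + s) - x * stdSurv (x + s))) s := by
  have h1 : HasDerivAt (fun w : ℝ => stdSurv (x - w)) (stdPhi (x - s)) s := by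
    have hb : HasDerivAt (fun w : ℝ => x - w) (-1) s := (hasDerivAt_id s).const_sub x
    have hc := (hasDerivAt_stdCdf (x - s)).comp s hb
    have h2 := hc.const_sub 1
    simpa [stdSurv, Function.comp] using h2
  have h2 : HasDerivAt (fun w : ℝ => Real.exp (2 * x * w)) (2 * x * Real.exp (2 * x * s)) s := by
    have hb : HasDerivAt (fun w : ℝ => 2 * x * w) (2 * x) s := by
      simpa using (hasDerivAt_id s).const_mul (2 * x)
    simpa [mul_comm] using hb.exp
  have h3 : HasDerivAt (fun w : ℝ => stdSurv (x + w)) (-stdPhi (x + s)) s := by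
    have hb : HasDerivAt (fun w : ℝ => x + w) 1 s := (hasDerivAt_id s).const_add x
    have hc := (hasDerivAt_stdCdf (x + s)).comp s hb
    simpa [stdSurv, Function.comp] using hc.const_sub 1
  have h5 := h1.sub (h2.mul h3)
  refine h5.congr_deriv ?_
  rw [stdPhi_reflect x s]; ring

lemma continuous_D (x : ℝ) :
    Continuous fun s : ℝ => 2 * Real.exp (2 * x * s) * (stdPhi (x + s) - x * stdSurv (x + s)) := by
  apply Continuous.mul
  · exact continuous_const.mul (Real.continuous_exp.comp (continuous_const.mul continuous_id))
  · exact (continuous_stdPhi.comp (continuous_const.add continuous_id)).sub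
      (continuous_const.mul (continuous_stdSurv.comp (continuous_const.add continuous_id)))

lemma fFun_zero (x : ℝ) : fFun x 0 = 0 := by unfold fFun; simp

lemma fFun_eq_integral (x w : ℝ) :
    fFun x w = ∫ s in (0:ℝ)..w,
      2 * Real.exp (2 * x * s) * (stdPhi (x + s) - x * stdSurv (x + s)) := by
  have h := intervalIntegral.integral_eq_sub_of_hasDerivAt (a := (0:ℝ)) (b := w)
    (f := fun s => fFun x s)
    (f' := fun s => 2 * Real.exp (2 * x * s) * (stdPhi (x + s) - x * stdSurv (x + s)))
    (fun s _ => hasDerivAt_fFun x s) ((continuous_D x).intervalIntegrable 0 w)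
  rw [h, fFun_zero, sub_zero]

lemma D_nonneg {x : ℝ} (hx : 0 ≤ x) {s : ℝ} (hs : 0 ≤ s) :
    0 ≤ 2 * Real.exp (2 * x * s) * (stdPhi (x + s) - x * stdSurv (x + s)) := by
  have h1 := mills hx (by linarith : x ≤ x + s)
  have h2 : (0:ℝ) < Real.exp (2 * x * s) := Real.exp_pos _
  nlinarith

lemma fFun_nonneg {x w : ℝ} (hx : 0 ≤ x) (hw : 0 ≤ w) : 0 ≤ fFun x w := by
  rw [fFun_eq_integral]
  apply intervalIntegral.integral_nonneg hw
  intro u hu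
  exact D_nonneg hx hu.1

lemma stdCdf_nonneg (u : ℝ) : 0 ≤ stdCdf u :=
  MeasureTheory.integral_nonneg (fun s => (stdPhi_pos s).le)

lemma stdCdf_le_one (u : ℝ) : stdCdf u ≤ 1 := by
  rw [← stdCdf_total]
  exact MeasureTheory.setIntegral_le_integral integrable_stdPhi
    (MeasureTheory.ae_of_all _ (fun s => (stdPhi_pos s).le))

lemma stdSurv_nonneg (u : ℝ) : 0 ≤ stdSurv u := by
  have := stdCdf_le_one u; unfold stdSurv; linarith

lemma stdSurv_le_one (u : ℝ) : stdSurv u ≤ 1 := by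
  have := stdCdf_nonneg u; unfold stdSurv; linarith

lemma fFun_le_one {x y : ℝ} : fFun x y ≤ 1 := by
  unfold fFun
  have h1 := stdSurv_le_one (x - y)
  have h2 := stdSurv_nonneg (x + y)
  have h3 : (0:ℝ) < Real.exp (2 * x * y) := Real.exp_pos _
  nlinarith

lemma fFun_lower (A : ℝ) (hA : 0 < A) :
    ∃ δ : ℝ, 0 < δ ∧ ∀ x w w₀ : ℝ, 0 ≤ x → x ≤ A → 0 < w₀ → w₀ ≤ 1 → w₀ ≤ w →
      2 * δ * w₀ ≤ fFun x w := by
  have hgc : Continuous fun p : ℝ × ℝ => stdPhi (p.1 + p.2) - p.1 * stdSurv (p.1 + p.2) := by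
    apply Continuous.sub
    · exact continuous_stdPhi.comp (continuous_fst.add continuous_snd)
    · exact continuous_fst.mul (continuous_stdSurv.comp (continuous_fst.add continuous_snd))
  have hKc : IsCompact (Set.Icc (0:ℝ) A ×ˢ Set.Icc (0:ℝ) 1) := isCompact_Icc.prod isCompact_Icc
  have hKne : (Set.Icc (0:ℝ) A ×ˢ Set.Icc (0:ℝ) 1).Nonempty :=
    ⟨(0, 0), Set.mem_prod.mpr ⟨Set.left_mem_Icc.mpr hA.le, Set.left_mem_Icc.mpr zero_le_one⟩⟩
  obtain ⟨p₀, hp₀K, hp₀min⟩ := hKc.exists_isMinOn hKne hgc.continuousOn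
  obtain ⟨hp₀1, hp₀2⟩ := Set.mem_prod.mp hp₀K
  refine ⟨stdPhi (p₀.1 + p₀.2) - p₀.1 * stdSurv (p₀.1 + p₀.2), ?_, ?_⟩
  · have := mills (x := p₀.1) (u := p₀.1 + p₀.2) hp₀1.1 (by linarith [hp₀2.1])
    linarith
  · intro x w w₀ hx hxA hw₀ hw₀1 hw₀w
    have hδ : ∀ s ∈ Set.Icc (0:ℝ) w₀,
        stdPhi (p₀.1 + p₀.2) - p₀.1 * stdSurv (p₀.1 + p₀.2)
          ≤ stdPhi (x + s) - x * stdSurv (x + s) := by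
      intro s hs
      have := isMinOn_iff.mp hp₀min (x, s)
        (Set.mem_prod.mpr ⟨⟨hx, hxA⟩, ⟨hs.1, le_trans hs.2 hw₀1⟩⟩)
      simpa using this
    rw [fFun_eq_integral]
    have hsplit : (∫ s in (0:ℝ)..w₀,
          2 * Real.exp (2 * x * s) * (stdPhi (x + s) - x * stdSurv (x + s)))
        + (∫ s in w₀..w,
          2 * Real.exp (2 * x * s) * (stdPhi (x + s) - x * stdSurv (x + s)))
        = ∫ s in (0:ℝ)..w,
          2 * Real.exp (2 * x * s) * (stdPhi (x + s) - x * stdSurv (x + s)) :=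
      intervalIntegral.integral_add_adjacent_intervals
        ((continuous_D x).intervalIntegrable _ _) ((continuous_D x).intervalIntegrable _ _)
    have htail : 0 ≤ ∫ s in w₀..w,
        2 * Real.exp (2 * x * s) * (stdPhi (x + s) - x * stdSurv (x + s)) := by
      apply intervalIntegral.integral_nonneg hw₀w
      intro u hu
      exact D_nonneg hx (le_trans hw₀.le hu.1)
    have hhead : 2 * (stdPhi (p₀.1 + p₀.2) - p₀.1 * stdSurv (p₀.1 + p₀.2)) * w₀
        ≤ ∫ s in (0:ℝ)..w₀,
          2 * Real.exp (2 * x * s) * (stdPhi (x + s) - x * stdSurv (x + s)) := by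
      have hmono := intervalIntegral.integral_mono_on (μ := volume) (a := (0:ℝ)) (b := w₀) hw₀.le
        (intervalIntegrable_const
          (c := 2 * (stdPhi (p₀.1 + p₀.2) - p₀.1 * stdSurv (p₀.1 + p₀.2))))
        ((continuous_D x).intervalIntegrable _ _)
        (fun s hs => by
          have h1 : (1:ℝ) ≤ Real.exp (2 * x * s) :=
            Real.one_le_exp (by nlinarith [hs.1])
          have h2 := hδ s hs
          have h3 : 0 < stdPhi (x + s) - x * stdSurv (x + s) := by
            have := mills hx (by linarith [hs.1] : x ≤ x + s); linarith
          nlinarith)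
      rw [intervalIntegral.integral_const, smul_eq_mul] at hmono
      calc 2 * (stdPhi (p₀.1 + p₀.2) - p₀.1 * stdSurv (p₀.1 + p₀.2)) * w₀
          = (w₀ - 0) * (2 * (stdPhi (p₀.1 + p₀.2) - p₀.1 * stdSurv (p₀.1 + p₀.2))) := by ring
        _ ≤ _ := hmono
    linarith

noncomputable def gFun (x y : ℝ) : ℝ := 1 - x * stdSurv (x + y) / stdPhi (x + y)

lemma continuous_fFun_snd (x : ℝ) : Continuous (fun y => fFun x y) := by
  unfold fFun
  apply Continuous.sub
  · exact continuous_stdSurv.comp (continuous_const.sub continuous_id)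
  · exact (Real.continuous_exp.comp (continuous_const.mul continuous_id)).mul
      (continuous_stdSurv.comp (continuous_const.add continuous_id))

/-- Gaussian-averaged lower bound of order 1/√t for the hitting probability with small drift. -/
theorem gaussian_lower_bound_plus (σ A : ℝ) (hσ : 0 < σ) (hA : 0 < A) :
    ∃ c : ℝ, 0 < c ∧ ∀ t : ℝ, 1 ≤ t → ∀ h : ℝ, 0 ≤ h → h ≤ A / Real.sqrt t →
      c / Real.sqrt t ≤
        ∫ z, (stdSurv (h * Real.sqrt t - max (z - h) 0 / σ ^ 2 / Real.sqrt t) -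
            Real.exp (2 * h * (max (z - h) 0 / σ ^ 2)) *
              stdSurv (h * Real.sqrt t + max (z - h) 0 / σ ^ 2 / Real.sqrt t))
          ∂(ProbabilityTheory.gaussianReal 0 (Real.toNNReal (σ ^ 2))) := by
  obtain ⟨δ, hδ, hbound⟩ := fFun_lower A hA
  set μ := ProbabilityTheory.gaussianReal 0 (Real.toNNReal (σ ^ 2)) with hμ
  have hσ2 : (0:ℝ) < σ ^ 2 := by positivity
  have hv : Real.toNNReal (σ ^ 2) ≠ 0 := by
    simp only [ne_eq, Real.toNNReal_eq_zero, not_le]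
    exact hσ2
  set S := Set.Ici (A + σ ^ 2) with hS
  have hμS0 : μ S ≠ 0 := by
    intro h0
    have habs := ProbabilityTheory.gaussianReal_absolutelyContinuous' 0 hv
    have : (volume : Measure ℝ) S = 0 := habs h0
    rw [hS, Real.volume_Ici] at this
    exact ENNReal.top_ne_zero this
  have hμStop : μ S ≠ ⊤ := measure_ne_top μ S
  have hμS : 0 < (μ S).toReal := ENNReal.toReal_pos hμS0 hμStop
  refine ⟨2 * δ * (μ S).toReal, by positivity, ?_⟩
  intro t ht h hh0 hhA
  have hst1 : (1:ℝ) ≤ Real.sqrt t := by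
    rw [show (1:ℝ) = Real.sqrt 1 by simp]
    exact Real.sqrt_le_sqrt ht
  have hst : (0:ℝ) < Real.sqrt t := lt_of_lt_of_le one_pos hst1
  set x := h * Real.sqrt t with hx
  set wz : ℝ → ℝ := fun z => max (z - h) 0 / σ ^ 2 / Real.sqrt t with hwz
  have hxA : x ≤ A := by
    rw [hx]
    calc h * Real.sqrt t ≤ (A / Real.sqrt t) * Real.sqrt t :=
          mul_le_mul_of_nonneg_right hhA hst.le
      _ = A := by field_simp
  have hx0 : 0 ≤ x := mul_nonneg hh0 hst.le
  have hw0 : ∀ z, 0 ≤ wz z := fun z => by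
    rw [hwz]
    positivity
  have hFeq : ∀ z : ℝ,
      stdSurv (h * Real.sqrt t - max (z - h) 0 / σ ^ 2 / Real.sqrt t) -
          Real.exp (2 * h * (max (z - h) 0 / σ ^ 2)) *
            stdSurv (h * Real.sqrt t + max (z - h) 0 / σ ^ 2 / Real.sqrt t)
        = fFun x (wz z) := by
    intro z
    rw [fFun, hx, hwz]
    congr 2
    field_simp
  have hFcont : Continuous fun z => fFun x (wz z) := by
    apply (continuous_fFun_snd x).comp
    rw [hwz]
    exact (((continuous_id.sub continuous_const).max continuous_const).div_const _).div_const _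
  have hFint : Integrable (fun z => fFun x (wz z)) μ := by
    refine Integrable.mono' (integrable_const 1) hFcont.aestronglyMeasurable ?_
    filter_upwards with z
    rw [Real.norm_eq_abs, abs_le]
    exact ⟨by linarith [fFun_nonneg hx0 (hw0 z)], fFun_le_one⟩
  have hstep1 : (∫ z in S, fFun x (wz z) ∂μ) ≤ ∫ z, fFun x (wz z) ∂μ :=
    MeasureTheory.setIntegral_le_integral hFint
      (Filter.Eventually.of_forall fun z => fFun_nonneg hx0 (hw0 z))
  have hstep2 : (∫ _ in S, 2 * δ / Real.sqrt t ∂μ) ≤ ∫ z in S, fFun x (wz z) ∂μ := by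
    apply MeasureTheory.setIntegral_mono_on
      (MeasureTheory.integrableOn_const hμStop)
      hFint.integrableOn measurableSet_Ici
    intro z hz
    have hzS : A + σ ^ 2 ≤ z := hz
    have hzh : σ ^ 2 ≤ z - h := by
      have : h ≤ A := le_trans hhA (by
        rw [div_le_iff₀ hst]
        nlinarith)
      linarith
    have hmax : max (z - h) 0 = z - h := max_eq_left (by linarith)
    have hw₀le : 1 / Real.sqrt t ≤ wz z := by
      rw [hwz]
      simp only [hmax]
      gcongr
      rw [le_div_iff₀ hσ2]
      linarith
    have := hbound x (wz z) (1 / Real.sqrt t) hx0 hxA (by positivity)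
      (by rw [div_le_one hst]; exact hst1) hw₀le
    calc 2 * δ / Real.sqrt t = 2 * δ * (1 / Real.sqrt t) := by ring
      _ ≤ fFun x (wz z) := this
  have hconst : (∫ _ in S, 2 * δ / Real.sqrt t ∂μ) = (μ S).toReal * (2 * δ / Real.sqrt t) := by
    rw [MeasureTheory.setIntegral_const, smul_eq_mul]; rfl
  have hgoal : 2 * δ * (μ S).toReal / Real.sqrt t ≤ ∫ z, fFun x (wz z) ∂μ := by
    rw [show 2 * δ * (μ S).toReal / Real.sqrt t
        = (μ S).toReal * (2 * δ / Real.sqrt t) by ring]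
    rw [← hconst]
    exact le_trans hstep2 hstep1
  calc 2 * δ * (μ S).toReal / Real.sqrt t ≤ ∫ z, fFun x (wz z) ∂μ := hgoal
    _ = _ := (MeasureTheory.integral_congr_ae
        (Filter.Eventually.of_forall fun z => (hFeq z).symm))
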